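/- arXiv:2105.09075 — 2 statements merged into one kernel-verified Lean document; each statement's English description precedes it below -/
import Mathlib

section
/- Weak duality with eigenvalue perturbation: let p* be the optimal value of min ⟨C,X⟩ subject to A(X)=b, B(X)=s, X ⪰ 0, L ≤ X ≤ U, l ≤ s ≤ u. Given any ỹ ∈ ℝᵐ, ṽ ∈ ℝ^q, S̃ ∈ S^n, define Z := C − A*ỹ − B*ṽ − S̃. If x̄ is an upper bound on the largest eigenvalue of an optimal solution X*, then p* ≥ bᵀỹ + F₁(S̃) + F₂(ṽ) + x̄·Σ_{λ∈λ(Z), λ<0} λ, where F₁(S) = inf{⟨S,W⟩ : L ≤ W ≤ U} and F₂(v) = inf{⟨v,ω⟩ : l ≤ ω ≤ u}. -/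
open Matrix

lemma psd_diag_nonneg {n : ℕ} {M : Matrix (Fin n) (Fin n) ℝ} (hM : M.PosSemidef) (i : Fin n) :
    0 ≤ M i i := by
  have := hM.dotProduct_mulVec_nonneg (Pi.single i 1)
  simpa [dotProduct, mulVec, Pi.single_apply, Finset.sum_ite_eq, Finset.sum_ite_eq'] using this

lemma psd_smul_one_sub {n : ℕ} {X : Matrix (Fin n) (Fin n) ℝ} (hX : X.PosSemidef)
    (xbar : ℝ) (hxb : ∀ i, hX.1.eigenvalues i ≤ xbar) :
    (xbar • (1 : Matrix (Fin n) (Fin n) ℝ) - X).PosSemidef := by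
  have hV := hX.1.spectral_theorem
  set V : Matrix (Fin n) (Fin n) ℝ := (hX.1.eigenvectorUnitary : Matrix (Fin n) (Fin n) ℝ)
  have hVV : V * star V = 1 := (Matrix.mem_unitaryGroup_iff).mp hX.1.eigenvectorUnitary.2
  have key : xbar • (1 : Matrix (Fin n) (Fin n) ℝ) - X
      = V * (diagonal (fun i => xbar - hX.1.eigenvalues i)) * star V := by
    have h1 : diagonal (fun i => xbar - hX.1.eigenvalues i)
        = xbar • (1 : Matrix (Fin n) (Fin n) ℝ) - diagonal (RCLike.ofReal ∘ hX.1.eigenvalues) := by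
      ext i j
      by_cases h : i = j <;> simp [diagonal, h, Matrix.one_apply, Matrix.smul_apply]
    rw [h1]
    rw [mul_sub, sub_mul]
    rw [show V * (xbar • (1 : Matrix (Fin n) (Fin n) ℝ)) = xbar • V by simp,
      Matrix.smul_mul, hVV]
    rw [Unitary.conjStarAlgAut_apply] at hV
    exact congrArg (fun Y => xbar • (1 : Matrix (Fin n) (Fin n) ℝ) - Y) hV
  rw [key]
  exact (Matrix.posSemidef_diagonal_iff.mpr (fun i => sub_nonneg.mpr (hxb i))).mul_mul_conjTranspose_same V

lemma key_trace {n : ℕ} (Z X : Matrix (Fin n) (Fin n) ℝ) (hZ : Z.IsHermitian)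
    (hX : X.PosSemidef) (xbar : ℝ) (hxb : ∀ i, hX.1.eigenvalues i ≤ xbar) :
    xbar * ∑ i ∈ Finset.univ.filter (fun i => hZ.eigenvalues i < 0), hZ.eigenvalues i
      ≤ (Z * X).trace := by
  set U : Matrix (Fin n) (Fin n) ℝ := (hZ.eigenvectorUnitary : Matrix (Fin n) (Fin n) ℝ) with hU
  have hUU : star U * U = 1 :=
    (Matrix.mem_unitaryGroup_iff').mp hZ.eigenvectorUnitary.2
  set M : Matrix (Fin n) (Fin n) ℝ := star U * X * U with hM
  have hMpsd : M.PosSemidef := by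
    have := hX.conjTranspose_mul_mul_same (B := U)
    simpa [hM, Matrix.star_eq_conjTranspose] using this
  have hMub : ∀ i, M i i ≤ xbar := by
    intro i
    have h1 : (star U * (xbar • (1 : Matrix (Fin n) (Fin n) ℝ) - X) * U).PosSemidef := by
      have := (psd_smul_one_sub hX xbar hxb).conjTranspose_mul_mul_same (B := U)
      simpa [Matrix.star_eq_conjTranspose] using this
    have h2 : star U * (xbar • (1 : Matrix (Fin n) (Fin n) ℝ) - X) * U
        = xbar • (1 : Matrix (Fin n) (Fin n) ℝ) - M := by
      rw [mul_sub, sub_mul, hM]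
      congr 1
      rw [show star U * (xbar • (1 : Matrix (Fin n) (Fin n) ℝ)) = xbar • star U by simp,
        Matrix.smul_mul, hUU]
    rw [h2] at h1
    have := psd_diag_nonneg h1 i
    simp [Matrix.sub_apply, Matrix.smul_apply, Matrix.one_apply] at this
    linarith
  have htr : (Z * X).trace = ∑ i, hZ.eigenvalues i * M i i := by
    conv_lhs => rw [hZ.spectral_theorem, Unitary.conjStarAlgAut_apply, ← hU]
    rw [Matrix.trace_mul_cycle (U * diagonal (RCLike.ofReal ∘ hZ.eigenvalues)) (star U) X,
      Matrix.trace_mul_cycle X (U * diagonal (RCLike.ofReal ∘ hZ.eigenvalues)) (star U)]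
    rw [show star U * X * (U * diagonal (RCLike.ofReal ∘ hZ.eigenvalues))
        = M * diagonal (RCLike.ofReal ∘ hZ.eigenvalues) by rw [hM]; simp [Matrix.mul_assoc]]
    simp [Matrix.trace, Matrix.diag, Matrix.mul_diagonal, mul_comm]
  rw [htr]
  have hsplit : ∑ i, hZ.eigenvalues i * M i i
      = ∑ i ∈ Finset.univ.filter (fun i => hZ.eigenvalues i < 0), hZ.eigenvalues i * M i i
      + ∑ i ∈ Finset.univ.filter (fun i => ¬ hZ.eigenvalues i < 0), hZ.eigenvalues i * M i i := by
    exact (Finset.sum_filter_add_sum_filter_not _ _ _).symm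
  rw [hsplit, Finset.mul_sum]
  have h1 : ∑ i ∈ Finset.univ.filter (fun i => hZ.eigenvalues i < 0), xbar * hZ.eigenvalues i
      ≤ ∑ i ∈ Finset.univ.filter (fun i => hZ.eigenvalues i < 0), hZ.eigenvalues i * M i i := by
    apply Finset.sum_le_sum
    intro i hi
    simp only [Finset.mem_filter] at hi
    have := hMub i
    nlinarith [psd_diag_nonneg hMpsd i]
  have h2 : (0:ℝ) ≤ ∑ i ∈ Finset.univ.filter (fun i => ¬ hZ.eigenvalues i < 0), hZ.eigenvalues i * M i i := by
    apply Finset.sum_nonneg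
    intro i hi
    simp only [Finset.mem_filter, not_lt] at hi
    exact mul_nonneg hi.2 (psd_diag_nonneg hMpsd i)
  linarith

lemma min_mul_le (s a b x : ℝ) (h1 : a ≤ x) (h2 : x ≤ b) : min (s*a) (s*b) ≤ s*x := by
  rcases le_total 0 s with hs|hs
  · exact min_le_of_left_le (by nlinarith)
  · exact min_le_of_right_le (by nlinarith)

theorem stmt5 {n m q : ℕ}
    (C : Matrix (Fin n) (Fin n) ℝ) (hC : C.IsSymm)
    (A : Matrix (Fin n) (Fin n) ℝ →ₗ[ℝ] (Fin m → ℝ))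
    (B : Matrix (Fin n) (Fin n) ℝ →ₗ[ℝ] (Fin q → ℝ))
    (Astar : (Fin m → ℝ) →ₗ[ℝ] Matrix (Fin n) (Fin n) ℝ)
    (Bstar : (Fin q → ℝ) →ₗ[ℝ] Matrix (Fin n) (Fin n) ℝ)
    (hAadj : ∀ (y : Fin m → ℝ) (X : Matrix (Fin n) (Fin n) ℝ),
      A X ⬝ᵥ y = ((Astar y)ᵀ * X).trace)
    (hBadj : ∀ (v : Fin q → ℝ) (X : Matrix (Fin n) (Fin n) ℝ),
      B X ⬝ᵥ v = ((Bstar v)ᵀ * X).trace)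
    (b : Fin m → ℝ) (L U : Matrix (Fin n) (Fin n) ℝ) (l u : Fin q → ℝ)
    (Xstar : Matrix (Fin n) (Fin n) ℝ) (sstar : Fin q → ℝ)
    -- feasibility of the optimal solution Xstar
    (hfeasA : A Xstar = b) (hfeasB : B Xstar = sstar)
    (hfeasP : Xstar.PosSemidef)
    (hfeasBox : ∀ i j, L i j ≤ Xstar i j ∧ Xstar i j ≤ U i j)
    (hfeass : ∀ i, l i ≤ sstar i ∧ sstar i ≤ u i)
    -- optimality of Xstar
    (hopt : ∀ (X' : Matrix (Fin n) (Fin n) ℝ) (s' : Fin q → ℝ),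
      (A X' = b ∧ B X' = s' ∧ X'.PosSemidef ∧
        (∀ i j, L i j ≤ X' i j ∧ X' i j ≤ U i j) ∧
        (∀ i, l i ≤ s' i ∧ s' i ≤ u i)) →
      (Cᵀ * Xstar).trace ≤ (Cᵀ * X').trace)
    -- upper bound on the largest eigenvalue of Xstar
    (xbar : ℝ) (hxbar : ∀ i, hfeasP.1.eigenvalues i ≤ xbar)
    -- dual data
    (ytilde : Fin m → ℝ) (vtilde : Fin q → ℝ)
    (Stilde : Matrix (Fin n) (Fin n) ℝ) (hStilde : Stilde.IsSymm)
    (hZ : (C - Astar ytilde - Bstar vtilde - Stilde).IsHermitian) :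
    b ⬝ᵥ ytilde
      + sInf {r : ℝ | ∃ W : Matrix (Fin n) (Fin n) ℝ,
          (∀ i j, L i j ≤ W i j ∧ W i j ≤ U i j) ∧ r = (Stildeᵀ * W).trace}
      + sInf {r : ℝ | ∃ ω : Fin q → ℝ,
          (∀ i, l i ≤ ω i ∧ ω i ≤ u i) ∧ r = vtilde ⬝ᵥ ω}
      + xbar * ∑ i ∈ Finset.univ.filter (fun i => hZ.eigenvalues i < 0), hZ.eigenvalues i
      ≤ (Cᵀ * Xstar).trace := by
  set Z := C - Astar ytilde - Bstar vtilde - Stilde with hZdef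
  -- basic identities
  have e1 : b ⬝ᵥ ytilde = ((Astar ytilde)ᵀ * Xstar).trace := by
    rw [← hfeasA, hAadj]
  have e2 : vtilde ⬝ᵥ sstar = ((Bstar vtilde)ᵀ * Xstar).trace := by
    rw [dotProduct_comm, ← hfeasB, hBadj]
  -- bound F1
  have hF1 : sInf {r : ℝ | ∃ W : Matrix (Fin n) (Fin n) ℝ,
          (∀ i j, L i j ≤ W i j ∧ W i j ≤ U i j) ∧ r = (Stildeᵀ * W).trace}
      ≤ (Stildeᵀ * Xstar).trace := by
    apply csInf_le
    · refine ⟨∑ i : Fin n, ∑ j : Fin n, min (Stilde j i * L j i) (Stilde j i * U j i), ?_⟩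
      rintro r ⟨W, hW, rfl⟩
      have : (Stildeᵀ * W).trace = ∑ i : Fin n, ∑ j : Fin n, Stilde j i * W j i := by
        simp [Matrix.trace, Matrix.diag, Matrix.mul_apply, Matrix.transpose_apply]
      rw [this]
      exact Finset.sum_le_sum fun i _ => Finset.sum_le_sum fun j _ =>
        min_mul_le _ _ _ _ (hW j i).1 (hW j i).2
    · exact ⟨Xstar, hfeasBox, rfl⟩
  -- bound F2
  have hF2 : sInf {r : ℝ | ∃ ω : Fin q → ℝ,
          (∀ i, l i ≤ ω i ∧ ω i ≤ u i) ∧ r = vtilde ⬝ᵥ ω}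
      ≤ vtilde ⬝ᵥ sstar := by
    apply csInf_le
    · refine ⟨∑ i : Fin q, min (vtilde i * l i) (vtilde i * u i), ?_⟩
      rintro r ⟨ω, hω, rfl⟩
      exact Finset.sum_le_sum fun i _ => min_mul_le _ _ _ _ (hω i).1 (hω i).2
    · exact ⟨sstar, hfeass, rfl⟩
  -- eigenvalue bound
  have hZT : Zᵀ = Z := by
    ext i j
    have := congrFun (congrFun hZ.eq i) j
    simpa using this
  have hkey : xbar * ∑ i ∈ Finset.univ.filter (fun i => hZ.eigenvalues i < 0), hZ.eigenvalues i
      ≤ (Zᵀ * Xstar).trace := by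
    rw [hZT]
    exact key_trace Z Xstar hZ hfeasP xbar hxbar
  -- decomposition
  have hdecomp : (Cᵀ * Xstar).trace = ((Astar ytilde)ᵀ * Xstar).trace
      + ((Bstar vtilde)ᵀ * Xstar).trace + (Stildeᵀ * Xstar).trace + (Zᵀ * Xstar).trace := by
    rw [hZdef]
    simp only [Matrix.transpose_sub, Matrix.sub_mul, Matrix.trace_sub]
    ring
  linarith
end

section
/- The solution of the proximal step for S in the extended ADMM admits the closed form S = (1/σ)·P_{[L,U]}(σM) − M, where M ∈ S^n is given data: that is, S minimizes over S ∈ S^n the function −F₁(S) + (σ/2)‖M + S‖²_F with F₁(S) = inf{⟨S,W⟩ : L ≤ W ≤ U}. -/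
open Matrix

private lemma min_le_smul {s l u w : ℝ} (hl : l ≤ w) (hu : w ≤ u) :
    min (s * l) (s * u) ≤ s * w := by
  rcases le_total 0 s with hs | hs
  · exact le_trans (min_le_left _ _) (mul_le_mul_of_nonneg_left hl hs)
  · exact le_trans (min_le_right _ _) (mul_le_mul_of_nonpos_left hu hs)

private lemma sInf_eq_min {n : ℕ} (L U S : Matrix (Fin n) (Fin n) ℝ)
    (hLU : ∀ i j, L i j ≤ U i j) :
    sInf {r : ℝ | ∃ W : Matrix (Fin n) (Fin n) ℝ,
        (∀ i j, L i j ≤ W i j ∧ W i j ≤ U i j) ∧ r = ∑ i, ∑ j, S i j * W i j}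
      = ∑ i, ∑ j, min (S i j * L i j) (S i j * U i j) := by
  apply le_antisymm
  · apply csInf_le
    · refine ⟨∑ i, ∑ j, min (S i j * L i j) (S i j * U i j), ?_⟩
      rintro r ⟨W, hW, rfl⟩
      exact Finset.sum_le_sum fun i _ => Finset.sum_le_sum fun j _ =>
        min_le_smul (hW i j).1 (hW i j).2
    · refine ⟨Matrix.of (fun i j => if 0 ≤ S i j then L i j else U i j), ?_, ?_⟩
      · intro i j
        simp only [Matrix.of_apply]
        split_ifs
        · exact ⟨le_refl _, hLU i j⟩
        · exact ⟨hLU i j, le_refl _⟩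
      · refine Finset.sum_congr rfl fun i _ => Finset.sum_congr rfl fun j _ => ?_
        simp only [Matrix.of_apply]
        split_ifs with hs
        · exact min_eq_left (mul_le_mul_of_nonneg_left (hLU i j) hs)
        · exact min_eq_right (mul_le_mul_of_nonpos_left (hLU i j) (le_of_not_ge hs))
  · refine le_csInf ⟨_, L, fun i j => ⟨le_refl _, hLU i j⟩, rfl⟩ ?_
    rintro r ⟨W, hW, rfl⟩
    exact Finset.sum_le_sum fun i _ => Finset.sum_le_sum fun j _ =>
      min_le_smul (hW i j).1 (hW i j).2

private lemma keylem (σ l u m s : ℝ) (hσ : 0 < σ) (hlu : l ≤ u) :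
    σ / 2 * (m + (σ⁻¹ * max l (min u (σ * m)) - m)) ^ 2
        - min ((σ⁻¹ * max l (min u (σ * m)) - m) * l)
            ((σ⁻¹ * max l (min u (σ * m)) - m) * u)
      ≤ σ / 2 * (m + s) ^ 2 - min (s * l) (s * u) := by
  have hσ' : σ * σ⁻¹ = 1 := mul_inv_cancel₀ hσ.ne'
  have hσi : 0 < σ⁻¹ := inv_pos.mpr hσ
  rcases le_total (σ * m) l with hA | hA
  · -- clip = l
    have h1 : min u (σ * m) = σ * m := min_eq_right (hA.trans hlu)
    have h2 : max l (σ * m) = l := max_eq_left hA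
    rw [h1, h2]
    have hs' : 0 ≤ σ⁻¹ * l - m := by
      have h3 : σ⁻¹ * (σ * m) = m := by field_simp
      have := mul_le_mul_of_nonneg_left hA (le_of_lt hσi)
      linarith
    rw [min_eq_left (mul_le_mul_of_nonneg_left hlu hs')]
    have hLHS : σ / 2 * (m + (σ⁻¹ * l - m)) ^ 2 - (σ⁻¹ * l - m) * l
        = m * l - l ^ 2 / (2 * σ) := by field_simp; ring
    rw [hLHS]
    rcases le_total 0 s with hs | hs
    · rw [min_eq_left (mul_le_mul_of_nonneg_left hlu hs)]
      have hid : σ / 2 * (m + s) ^ 2 - s * l - (m * l - l ^ 2 / (2 * σ))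
          = σ / 2 * (m + s - l / σ) ^ 2 := by field_simp; ring
      nlinarith [sq_nonneg (m + s - l / σ), mul_nonneg hσ.le (sq_nonneg (m + s - l / σ))]
    · rw [min_eq_right (mul_le_mul_of_nonpos_left hlu hs)]
      have h3 : m * l - l ^ 2 / (2 * σ) ≤ σ * m ^ 2 / 2 := by
        have hid : σ * m ^ 2 / 2 - (m * l - l ^ 2 / (2 * σ)) = (σ * m - l) ^ 2 / (2 * σ) := by
          field_simp; ring
        nlinarith [div_nonneg (sq_nonneg (σ * m - l)) (by linarith : (0:ℝ) ≤ 2 * σ)]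
      have hσs : σ * s ≤ 0 := mul_nonpos_of_nonneg_of_nonpos hσ.le hs
      have h4 : (0:ℝ) ≤ (-s) * (u - σ * m - σ * s / 2) :=
        mul_nonneg (neg_nonneg.mpr hs) (by linarith)
      nlinarith [h4]
  · rcases le_total u (σ * m) with hB | hB
    · -- clip = u
      have h1 : min u (σ * m) = u := min_eq_left hB
      have h2 : max l u = u := max_eq_right hlu
      rw [h1, h2]
      have hs' : σ⁻¹ * u - m ≤ 0 := by
        have h3 : σ⁻¹ * (σ * m) = m := by field_simp
        have := mul_le_mul_of_nonneg_left hB (le_of_lt hσi)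
        linarith
      rw [min_eq_right (mul_le_mul_of_nonpos_left hlu hs')]
      have hLHS : σ / 2 * (m + (σ⁻¹ * u - m)) ^ 2 - (σ⁻¹ * u - m) * u
          = m * u - u ^ 2 / (2 * σ) := by field_simp; ring
      rw [hLHS]
      rcases le_total 0 s with hs | hs
      · rw [min_eq_left (mul_le_mul_of_nonneg_left hlu hs)]
        have h3 : m * u - u ^ 2 / (2 * σ) ≤ σ * m ^ 2 / 2 := by
          have hid : σ * m ^ 2 / 2 - (m * u - u ^ 2 / (2 * σ)) = (σ * m - u) ^ 2 / (2 * σ) := by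
            field_simp; ring
          nlinarith [div_nonneg (sq_nonneg (σ * m - u)) (by linarith : (0:ℝ) ≤ 2 * σ)]
        have hσs : 0 ≤ σ * s := mul_nonneg hσ.le hs
        have h4 : (0:ℝ) ≤ s * (σ * m - l + σ * s / 2) :=
          mul_nonneg hs (by linarith)
        nlinarith [h4]
      · rw [min_eq_right (mul_le_mul_of_nonpos_left hlu hs)]
        have hid : σ / 2 * (m + s) ^ 2 - s * u - (m * u - u ^ 2 / (2 * σ))
            = σ / 2 * (m + s - u / σ) ^ 2 := by field_simp; ring
        nlinarith [mul_nonneg hσ.le (sq_nonneg (m + s - u / σ))]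
    · -- clip = σ m
      have h1 : min u (σ * m) = σ * m := min_eq_right hB
      have h2 : max l (σ * m) = σ * m := max_eq_right hA
      rw [h1, h2]
      have hz : σ⁻¹ * (σ * m) - m = 0 := by field_simp; ring
      rw [hz]
      simp only [zero_mul, min_self, sub_zero]
      rcases le_total 0 s with hs | hs
      · rw [min_eq_left (mul_le_mul_of_nonneg_left hlu hs)]
        have p1 : 0 ≤ s * (σ * m - l) := mul_nonneg hs (by linarith)
        have p2 : 0 ≤ σ * s ^ 2 := mul_nonneg hσ.le (sq_nonneg s)
        linarith [p1, p2]
      · rw [min_eq_right (mul_le_mul_of_nonpos_left hlu hs)]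
        have p1 : 0 ≤ (-s) * (u - σ * m) := mul_nonneg (neg_nonneg.mpr hs) (by linarith)
        have p2 : 0 ≤ σ * s ^ 2 := mul_nonneg hσ.le (sq_nonneg s)
        linarith [p1, p2]

theorem stmt9 {n : ℕ} (σ : ℝ) (hσ : 0 < σ)
    (M L U : Matrix (Fin n) (Fin n) ℝ)
    (hM : M.IsSymm) (hL : L.IsSymm) (hU : U.IsSymm)
    (hLU : ∀ i j, L i j ≤ U i j)
    (Sstar : Matrix (Fin n) (Fin n) ℝ)
    (hSstar : Sstar = Matrix.of (fun i j => σ⁻¹ * max (L i j) (min (U i j) (σ * M i j)) - M i j)) :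
    ∀ S : Matrix (Fin n) (Fin n) ℝ,
      -(sInf {r : ℝ | ∃ W : Matrix (Fin n) (Fin n) ℝ,
            (∀ i j, L i j ≤ W i j ∧ W i j ≤ U i j) ∧ r = ∑ i, ∑ j, Sstar i j * W i j})
          + σ / 2 * ∑ i, ∑ j, (M i j + Sstar i j) ^ 2
        ≤ -(sInf {r : ℝ | ∃ W : Matrix (Fin n) (Fin n) ℝ,
            (∀ i j, L i j ≤ W i j ∧ W i j ≤ U i j) ∧ r = ∑ i, ∑ j, S i j * W i j})
          + σ / 2 * ∑ i, ∑ j, (M i j + S i j) ^ 2 := by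
  intro S
  rw [sInf_eq_min L U Sstar hLU, sInf_eq_min L U S hLU]
  have key : ∀ T : Matrix (Fin n) (Fin n) ℝ,
      -(∑ i, ∑ j, min (T i j * L i j) (T i j * U i j))
          + σ / 2 * ∑ i, ∑ j, (M i j + T i j) ^ 2
        = ∑ i, ∑ j, (σ / 2 * (M i j + T i j) ^ 2
            - min (T i j * L i j) (T i j * U i j)) := by
    intro T
    rw [neg_add_eq_sub, Finset.mul_sum, ← Finset.sum_sub_distrib]
    refine Finset.sum_congr rfl fun i _ => ?_
    rw [Finset.mul_sum, ← Finset.sum_sub_distrib]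
  rw [key, key]
  refine Finset.sum_le_sum fun i _ => Finset.sum_le_sum fun j _ => ?_
  have hS : Sstar i j = σ⁻¹ * max (L i j) (min (U i j) (σ * M i j)) - M i j := by
    rw [hSstar]; rfl
  rw [hS]
  exact keylem σ (L i j) (U i j) (M i j) (S i j) hσ (hLU i j)
end
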